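/- arXiv:1607.00703 — 3 statements merged into one kernel-verified Lean document; each statement's English description precedes it below -/
import Mathlib

section
/- There is no continuous map σ : S²₊ × S²₊ → (S²₊)^I with σ(p,q)(0) = p, σ(p,q)(1) = q, and ℓ(σ(p,q)) = d(p,q) for all p, q, where S²₊ is the closed upper hemisphere of the unit 2-sphere with its intrinsic metric. In other words, there is no continuous motion planner on the hemisphere all of whose output paths are minimizing geodesics. -/
open Set MeasureTheory unitInterval
open scoped Manifold ENNReal NNReal InnerProductSpace

noncomputable section

/-- The (metric) length of a path `γ : [0,1] → X`, possibly infinite. -/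
def pathLen {X : Type*} [PseudoEMetricSpace X] (γ : unitInterval → X) : ℝ≥0∞ :=
  eVariationOn γ Set.univ

/-- An `m`-motion planner on `X`: a family of `m + 1` continuous local sections of the
endpoint fibration `π : X^I → X × X`, `π γ = (γ 0, γ 1)`, whose domains of continuity are
locally compact, pairwise disjoint and cover `X × X`. -/
structure MotionPlanner (X : Type*) [TopologicalSpace X] (m : ℕ) where
  G : Fin (m + 1) → Set (X × X)
  sec : ∀ i, C((G i : Set (X × X)), C(unitInterval, X))
  locallyCompact : ∀ i, LocallyCompactSpace (G i)
  disj : ∀ i j, i ≠ j → Disjoint (G i) (G j)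
  covers : ⋃ i, G i = Set.univ
  sec_zero : ∀ i (x : G i), sec i x 0 = (x : X × X).1
  sec_one : ∀ i (x : G i), sec i x 1 = (x : X × X).2

namespace MotionPlanner

variable {X : Type*} [TopologicalSpace X] {m : ℕ}

/-- The output path of a motion planner at a pair of states `x = (p, q)`. -/
def path (P : MotionPlanner X m) (x : X × X) : unitInterval → X :=
  have h : ∃ i, x ∈ P.G i := Set.mem_iUnion.1 (by rw [P.covers]; exact Set.mem_univ x)
  P.sec h.choose ⟨x, h.choose_spec⟩

/-- The length of a motion planner: the integral over `X × X` of the lengths of the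
output paths. -/
def length {X : Type*} [PseudoMetricSpace X] [MeasurableSpace X] {m : ℕ}
    (P : MotionPlanner X m) (μ : Measure (X × X)) : ℝ≥0∞ :=
  ∫⁻ x, pathLen (P.path x) ∂μ

end MotionPlanner

/-- Farber's topological complexity of `X` (as an element of `ℕ∞`, `⊤` meaning that no
motion planner exists). -/
def topComplexity (X : Type*) [TopologicalSpace X] : ℕ∞ :=
  sInf {N : ℕ∞ | ∃ m : ℕ, N = m ∧ Nonempty (MotionPlanner X m)}

/-- Efficient topological complexity of a metric measure space: the minimal `m` admitting an
`m`-motion planner whose length equals the integral of the distance function. -/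
def eTopComplexity (X : Type*) [PseudoMetricSpace X] [MeasurableSpace X]
    (μ : Measure (X × X)) : ℕ∞ :=
  sInf {N : ℕ∞ | ∃ m : ℕ, N = m ∧ ∃ P : MotionPlanner X m,
    P.length μ = ∫⁻ x : X × X, edist x.1 x.2 ∂μ}

/-- A package of classical data and facts constituting the structure of a smooth closed
Riemannian manifold on `X` (a smooth compact boundaryless manifold whose metric-space
distance is the Riemannian distance): the exponential maps `exp p`, the maximal normal
neighbourhoods `U p ⊆ T_p X`, the cut loci `cut p`, and the Riemannian volume `vol`. -/
structure RiemannPackage (n : ℕ) (X : Type*) [MetricSpace X]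
    [ChartedSpace (EuclideanSpace ℝ (Fin n)) X]
    [IsManifold (𝓡 n) (⊤ : ℕ∞) X] [CompactSpace X]
    [MeasurableSpace X] [BorelSpace X] : Type _ where
  /-- The exponential map of `X` at each point, `T_p X ≅ ℝⁿ → X`. -/
  exp : X → EuclideanSpace ℝ (Fin n) → X
  /-- The maximal normal neighbourhood of `0` in `T_p X`. -/
  U : X → Set (EuclideanSpace ℝ (Fin n))
  /-- The cut locus of each point. -/
  cut : X → Set X
  /-- The Riemannian volume measure. -/
  vol : Measure X
  U_open : ∀ p, IsOpen (U p)
  zero_mem_U : ∀ p, (0 : EuclideanSpace ℝ (Fin n)) ∈ U p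
  U_star : ∀ p, ∀ v ∈ U p, ∀ t : ℝ, t ∈ Set.Icc (0 : ℝ) 1 → t • v ∈ U p
  exp_zero : ∀ p, exp p 0 = p
  /-- `exp p` maps the maximal normal neighbourhood bijectively onto `X ∖ cut p`. -/
  exp_bijOn : ∀ p, Set.BijOn (exp p) (U p) (cut p)ᶜ
  cut_closed : ∀ p, IsClosed (cut p)
  not_mem_cut_self : ∀ p, p ∉ cut p
  cut_symm : ∀ p q, q ∈ cut p ↔ p ∈ cut q
  /-- `exp` is smooth jointly in the base point and the tangent vector. -/
  exp_smooth : ContMDiff ((𝓡 n).prod (𝓡 n)) (𝓡 n) (⊤ : ℕ∞)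
    (fun pv : X × EuclideanSpace ℝ (Fin n) => exp pv.1 pv.2)
  /-- Radial geodesics inside the maximal normal neighbourhood are minimizing, with constant
  speed: `t ↦ exp p (t • v)` realizes the distance proportionally. -/
  exp_dist : ∀ p, ∀ v ∈ U p, ∀ s ∈ Set.Icc (0 : ℝ) 1, ∀ t ∈ Set.Icc (0 : ℝ) 1,
    dist (exp p (s • v)) (exp p (t • v)) = |s - t| * dist p (exp p v)
  /-- Every constant-speed minimizing geodesic from `p` with endpoint off the cut locus of `p`
  is a radial exponential curve. -/
  geodesic_rep : ∀ p, ∀ γ : unitInterval → X, γ 0 = p → (γ 1 ∉ cut p) →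
    (∀ s t : unitInterval, dist (γ s) (γ t) = |s.1 - t.1| * dist p (γ 1)) →
    ∃ v ∈ U p, ∀ t : unitInterval, γ t = exp p (t.1 • v)
  vol_finite : vol Set.univ < ⊤
  /-- The Riemannian volume has full support. -/
  vol_open_pos : ∀ s : Set X, IsOpen s → s.Nonempty → 0 < vol s

namespace RiemannPackage

variable {n : ℕ} {X : Type*} [MetricSpace X]
  [ChartedSpace (EuclideanSpace ℝ (Fin n)) X]
  [IsManifold (𝓡 n) (⊤ : ℕ∞) X] [CompactSpace X]
  [MeasurableSpace X] [BorelSpace X]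

/-- The Riemannian volume of the product `X × X`. -/
def prodVol (R : RiemannPackage n X) : Measure (X × X) := R.vol.prod R.vol

/-- The open set `V = {(p,q) | q ∉ Cut(p)}` of pairs joined by a unique minimizing
geodesic. -/
def V (R : RiemannPackage n X) : Set (X × X) := {x | x.2 ∉ R.cut x.1}

/-- The inverse of the exponential map at `p`, defined on `X ∖ cut p`. -/
def expInv (R : RiemannPackage n X) (p : X) (q : X) : EuclideanSpace ℝ (Fin n) :=
  Function.invFunOn (R.exp p) (R.U p) q

/-- The geodesic motion planner `σ₀ (p,q) (t) = exp p (t • exp p ⁻¹ q)`, as a map `ℝ → X`. -/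
def geo (R : RiemannPackage n X) (x : X × X) : ℝ → X :=
  fun t => R.exp x.1 (t • R.expInv x.1 x.2)

end RiemannPackage

/-- The closed upper hemisphere of the unit 2-sphere (with the subspace topology; its
chordal metric induces the same path lengths as the intrinsic Riemannian metric, whose
distance function is `(p, q) ↦ arccos ⟪p, q⟫`). -/
abbrev Hemi : Type := {x : EuclideanSpace ℝ (Fin 3) // ‖x‖ = 1 ∧ 0 ≤ x 2}


-- ======================================================================
-- Auxiliary development for `stmt7`
-- ======================================================================
section Stmt7Aux
open Real

abbrev E3 := EuclideanSpace ℝ (Fin 3)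

lemma arcsin_le_div (x : ℝ) (h0 : 0 ≤ x) (h1 : x < 1) :
    arcsin x ≤ x / Real.sqrt (1 - x ^ 2) := by
  rcases eq_or_lt_of_le h0 with h | h
  · simp [← h]
  · have ht0 : 0 < arcsin x := arcsin_pos.2 h
    have ht1 : arcsin x < π / 2 := arcsin_lt_pi_div_two.2 h1
    have := Real.lt_tan ht0 ht1
    rw [Real.tan_eq_sin_div_cos, Real.sin_arcsin (by linarith) h1.le, Real.cos_arcsin] at this
    exact this.le

lemma arc_le_chord_div (c ε : ℝ) (h0 : 0 ≤ c) (hcε : c ≤ ε) (hε : ε < 2) :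
    2 * arcsin (c / 2) ≤ c / Real.sqrt (1 - (ε / 2) ^ 2) := by
  have hc2 : c / 2 < 1 := by linarith
  have h1 := arcsin_le_div (c / 2) (by linarith) hc2
  have hKpos : (0:ℝ) < 1 - (ε / 2) ^ 2 := by nlinarith
  have hsq : (c / 2) ^ 2 ≤ (ε / 2) ^ 2 := by nlinarith
  have hmono : Real.sqrt (1 - (ε / 2) ^ 2) ≤ Real.sqrt (1 - (c / 2) ^ 2) :=
    Real.sqrt_le_sqrt (by linarith)
  have hKpos' : (0:ℝ) < Real.sqrt (1 - (ε / 2) ^ 2) := Real.sqrt_pos.2 hKpos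
  calc 2 * arcsin (c / 2) ≤ 2 * (c / 2 / Real.sqrt (1 - (c / 2) ^ 2)) := by linarith
    _ = c / Real.sqrt (1 - (c / 2) ^ 2) := by ring
    _ ≤ c / Real.sqrt (1 - (ε / 2) ^ 2) := div_le_div_of_nonneg_left h0 hKpos' hmono


lemma arccos_inner_eq (a b : E3) (ha : ‖a‖ = 1) (hb : ‖b‖ = 1) :
    arccos ⟪a, b⟫_ℝ = 2 * arcsin (‖a - b‖ / 2) := by
  have hc0 : (0:ℝ) ≤ ‖a - b‖ := norm_nonneg _
  have hc2 : ‖a - b‖ ≤ 2 := by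
    calc ‖a - b‖ ≤ ‖a‖ + ‖b‖ := norm_sub_le _ _
    _ = 2 := by rw [ha, hb]; norm_num
  have hinner : ⟪a, b⟫_ℝ = 1 - ‖a - b‖ ^ 2 / 2 := by
    have := norm_sub_sq_real a b
    rw [ha, hb] at this
    nlinarith [this]
  have hs : Real.sin (arcsin (‖a - b‖ / 2)) = ‖a - b‖ / 2 :=
    Real.sin_arcsin (by linarith) (by linarith)
  have hmem0 : 0 ≤ arcsin (‖a - b‖ / 2) := arcsin_nonneg.2 (by linarith)
  have hmem1 : arcsin (‖a - b‖ / 2) ≤ π / 2 := arcsin_le_pi_div_two _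
  have hcos : Real.cos (2 * arcsin (‖a - b‖ / 2)) = ⟪a, b⟫_ℝ := by
    have hpy := Real.sin_sq_add_cos_sq (arcsin (‖a - b‖ / 2))
    rw [Real.cos_two_mul', hinner]
    nlinarith [hs, hpy]
  rw [← hcos, Real.arccos_cos (by linarith) (by linarith)]

lemma inner_le_one (a b : E3) (ha : ‖a‖ = 1) (hb : ‖b‖ = 1) :
    |⟪a, b⟫_ℝ| ≤ 1 := by
  have := abs_real_inner_le_norm a b
  rwa [ha, hb, mul_one] at this

lemma norm_sub_smul (a b : E3) (ha : ‖a‖ = 1) (hb : ‖b‖ = 1) :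
    ‖a - ⟪a, b⟫_ℝ • b‖ = Real.sin (arccos ⟪a, b⟫_ℝ) := by
  have h1 : ‖a - ⟪a, b⟫_ℝ • b‖ ^ 2 = 1 - ⟪a, b⟫_ℝ ^ 2 := by
    rw [norm_sub_sq_real, real_inner_smul_right, norm_smul, ha]
    rw [norm_eq_abs, hb]
    ring_nf
    rw [sq_abs]
    ring
  rw [Real.sin_arccos, ← h1, Real.sqrt_sq (norm_nonneg _)]

lemma arccos_triangle' (a b c : E3) (ha : ‖a‖ = 1) (hb : ‖b‖ = 1) (hc : ‖c‖ = 1) :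
    arccos ⟪a, c⟫_ℝ ≤ arccos ⟪a, b⟫_ℝ + arccos ⟪b, c⟫_ℝ := by
  set α := arccos ⟪a, b⟫_ℝ with hα
  set β := arccos ⟪b, c⟫_ℝ with hβ
  by_cases hπ : π ≤ α + β
  · exact (Real.arccos_le_pi _).trans hπ
  push_neg at hπ
  have hab := inner_le_one a b ha hb
  have hbc := inner_le_one b c hb hc
  have hac := inner_le_one a c ha hc
  have hca : Real.cos α = ⟪a, b⟫_ℝ := Real.cos_arccos (by linarith [abs_le.1 hab]) (by linarith [abs_le.1 hab])
  have hcb : Real.cos β = ⟪b, c⟫_ℝ := Real.cos_arccos (by linarith [abs_le.1 hbc]) (by linarith [abs_le.1 hbc])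
  set u := a - ⟪a, b⟫_ℝ • b with hu
  set v := c - ⟪b, c⟫_ℝ • b with hv
  have huv : ⟪u, v⟫_ℝ = ⟪a, c⟫_ℝ - ⟪a, b⟫_ℝ * ⟪b, c⟫_ℝ := by
    simp only [hu, hv, inner_sub_left, inner_sub_right, real_inner_smul_left,
      real_inner_smul_right]
    have hbb : ⟪b, b⟫_ℝ = 1 := by
      rw [real_inner_self_eq_norm_sq, hb]; norm_num
    rw [hbb, real_inner_comm b a]
    ring
  have hnu : ‖u‖ = Real.sin α := norm_sub_smul a b ha hb
  have hnv : ‖v‖ = Real.sin β := by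
    have : ⟪b, c⟫_ℝ = ⟪c, b⟫_ℝ := real_inner_comm c b
    rw [hv, this]
    have := norm_sub_smul c b hc hb
    rw [this]
    rw [hβ, real_inner_comm b c]
  have hcs : |⟪u, v⟫_ℝ| ≤ Real.sin α * Real.sin β := by
    have := abs_real_inner_le_norm u v
    rwa [hnu, hnv] at this
  have key : Real.cos (α + β) ≤ ⟪a, c⟫_ℝ := by
    rw [Real.cos_add, hca, hcb]
    have := (abs_le.1 hcs).1
    rw [huv] at this
    linarith
  have h0 : 0 ≤ α + β := by linarith [Real.arccos_nonneg ⟪a,b⟫_ℝ, Real.arccos_nonneg ⟪b,c⟫_ℝ]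
  calc arccos ⟪a, c⟫_ℝ ≤ arccos (Real.cos (α + β)) := by
        unfold Real.arccos
        have := Real.monotone_arcsin key
        linarith
    _ = α + β := Real.arccos_cos h0 hπ.le

lemma arccos_chain (v : ℕ → E3) (hv : ∀ i, ‖v i‖ = 1) (n : ℕ) :
    arccos ⟪v 0, v n⟫_ℝ ≤ ∑ i ∈ Finset.range n, arccos ⟪v i, v (i + 1)⟫_ℝ := by
  induction n with
  | zero =>
    have : ⟪v 0, v 0⟫_ℝ = 1 := by
      rw [real_inner_self_eq_norm_sq, hv 0]; norm_num
    simp [this, hv 0, Real.arccos_one]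
  | succ n ih =>
    rw [Finset.sum_range_succ]
    calc arccos ⟪v 0, v (n + 1)⟫_ℝ
        ≤ arccos ⟪v 0, v n⟫_ℝ + arccos ⟪v n, v (n + 1)⟫_ℝ :=
          arccos_triangle' _ _ _ (hv 0) (hv n) (hv (n + 1))
      _ ≤ _ := by linarith

lemma dist_hemi (x y : Hemi) : dist x y = ‖x.1 - y.1‖ := by
  rw [Subtype.dist_eq, dist_eq_norm]

lemma dInt_le_var (γ : unitInterval → Hemi) (hγ : Continuous γ) (s t : unitInterval)
    (hst : s ≤ t) :
    ENNReal.ofReal (arccos ⟪(γ s).1, (γ t).1⟫_ℝ) ≤ eVariationOn γ (Set.Icc s t) := by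
  by_cases hV : eVariationOn γ (Set.Icc s t) = ⊤
  · rw [hV]; exact le_top
  rcases eq_or_lt_of_le hst with rfl | hlt
  · have : ⟪(γ s).1, (γ s).1⟫_ℝ = 1 := by
      rw [real_inner_self_eq_norm_sq, (γ s).2.1]; norm_num
    simp [this, (γ s).2.1, Real.arccos_one]
  set Vr := (eVariationOn γ (Set.Icc s t)).toReal with hVr
  have hVr0 : 0 ≤ Vr := ENNReal.toReal_nonneg
  set D := arccos ⟪(γ s).1, (γ t).1⟫_ℝ with hD
  have hD0 : 0 ≤ D := Real.arccos_nonneg _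
  -- main claim
  have claim : ∀ ε : ℝ, 0 < ε → ε < 2 → D * Real.sqrt (1 - (ε / 2) ^ 2) ≤ Vr := by
    intro ε hε0 hε2
    obtain ⟨δ, hδ0, hδ⟩ := Metric.uniformContinuous_iff.1
      (CompactSpace.uniformContinuous_of_continuous hγ) ε hε0
    obtain ⟨n, hn⟩ := exists_nat_one_div_lt hδ0
    set N := n + 1 with hN
    have hNpos : (0:ℝ) < N := by positivity
    have hts : (0:ℝ) ≤ (t:ℝ) - s := by
      have := hlt.le; exact sub_nonneg.2 this
    -- partition
    have hubd : ∀ i : ℕ, (s:ℝ) ≤ (s:ℝ) + (min i N : ℕ) * ((t:ℝ) - s) / N ∧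
        (s:ℝ) + (min i N : ℕ) * ((t:ℝ) - s) / N ≤ (t:ℝ) := by
      intro i
      have h1 : (0:ℝ) ≤ (min i N : ℕ) := Nat.cast_nonneg _
      have h2 : ((min i N : ℕ) : ℝ) ≤ N := by
        exact_mod_cast Nat.cast_le.2 (min_le_right i N)
      constructor
      · have : (0:ℝ) ≤ (min i N : ℕ) * ((t:ℝ) - s) / N := by positivity
        linarith
      · have : ((min i N : ℕ) : ℝ) * ((t:ℝ) - s) / N ≤ N * ((t:ℝ) - s) / N := by
          apply div_le_div_of_nonneg_right _ hNpos.le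
          exact mul_le_mul_of_nonneg_right h2 hts
        have h3 : (N:ℝ) * ((t:ℝ) - s) / N = (t:ℝ) - s := by field_simp
        linarith [h3 ▸ this]
    set u : ℕ → unitInterval := fun i =>
      ⟨(s:ℝ) + (min i N : ℕ) * ((t:ℝ) - s) / N,
        ⟨le_trans s.2.1 (hubd i).1, le_trans (hubd i).2 t.2.2⟩⟩ with hu
    have humem : ∀ i, u i ∈ Set.Icc s t := by
      intro i
      constructor
      · exact Subtype.mk_le_mk.2 (hubd i).1
      · exact Subtype.mk_le_mk.2 (hubd i).2
    have humono : Monotone u := by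
      intro i j hij
      apply Subtype.mk_le_mk.2
      have : ((min i N : ℕ) : ℝ) ≤ (min j N : ℕ) := by
        exact_mod_cast Nat.cast_le.2 (min_le_min_right N hij)  -- check
      have h2 := mul_le_mul_of_nonneg_right this hts
      have h3 := div_le_div_of_nonneg_right h2 hNpos.le
      linarith
    have hu0 : u 0 = s := by
      apply Subtype.ext
      simp [hu]
    have huN : u N = t := by
      apply Subtype.ext
      have : ((min N N : ℕ) : ℝ) = N := by simp
      simp only [hu]
      rw [this]
      field_simp
      ring
    have hsum := eVariationOn.sum_le (f := γ) (n := N) humono humem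
    -- chords
    set c : ℕ → ℝ := fun i => dist (γ (u (i + 1))) (γ (u i)) with hc
    have hcnn : ∀ i, 0 ≤ c i := fun i => dist_nonneg
    have hval : ∀ i : ℕ, ((u i : unitInterval) : ℝ) = (s:ℝ) + (min i N : ℕ) * ((t:ℝ) - s) / N :=
      fun i => rfl
    have hts1 : (t:ℝ) - s ≤ 1 := by
      have h1 := t.2.2; have h2 := s.2.1; linarith
    have hcsmall : ∀ i, c i < ε := by
      intro i
      apply hδ
      rw [Subtype.dist_eq, Real.dist_eq, hval, hval]
      have h1 : ((min (i+1) N : ℕ) : ℝ) - (min i N : ℕ) ≤ 1 := by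
        have : min (i+1) N ≤ min i N + 1 := by omega
        have h' : ((min (i+1) N : ℕ) : ℝ) ≤ ((min i N : ℕ) : ℝ) + 1 := by exact_mod_cast this
        linarith
      have h2 : (0:ℝ) ≤ ((min (i+1) N : ℕ) : ℝ) - (min i N : ℕ)  := by
        have : min i N ≤ min (i+1) N := by omega
        have h' : ((min i N : ℕ) : ℝ) ≤ ((min (i+1) N : ℕ) : ℝ) := by exact_mod_cast this
        linarith
      have hdiff : ((s:ℝ) + (min (i+1) N : ℕ) * ((t:ℝ) - s) / N) - ((s:ℝ) + (min i N : ℕ) * ((t:ℝ) - s) / N)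
          = (((min (i+1) N : ℕ) : ℝ) - ((min i N : ℕ) : ℝ)) * ((t:ℝ) - s) / N := by ring
      rw [hdiff, abs_of_nonneg (by positivity)]
      have hA : (((min (i+1) N : ℕ) : ℝ) - ((min i N : ℕ) : ℝ)) * ((t:ℝ) - s) / N ≤ 1 / N := by
        apply div_le_div_of_nonneg_right _ hNpos.le
        nlinarith
      have h1N : (1:ℝ) / N < δ := by
        rw [hN]; push_cast; exact hn
      linarith
    -- sum of chords is at most Vr
    have hsum' : ∑ i ∈ Finset.range N, c i ≤ Vr := by
      have heq : ENNReal.ofReal (∑ i ∈ Finset.range N, c i)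
          = ∑ i ∈ Finset.range N, ENNReal.ofReal (c i) :=
        ENNReal.ofReal_sum_of_nonneg (fun i _ => hcnn i)
      have h2 : ∑ i ∈ Finset.range N, ENNReal.ofReal (c i) ≤ eVariationOn γ (Set.Icc s t) := by
        refine le_trans (le_of_eq ?_) hsum
        exact Finset.sum_congr rfl (fun i _ => (edist_dist _ _).symm)
      exact (ENNReal.ofReal_le_iff_le_toReal hV).1 (heq ▸ h2)
    -- the chain bound
    have hchain : D ≤ ∑ i ∈ Finset.range N, arccos ⟪(γ (u i)).1, (γ (u (i+1))).1⟫_ℝ := by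
      have h := arccos_chain (fun i => (γ (u i)).1) (fun i => (γ (u i)).2.1) N
      simp only [] at h
      rw [hu0, huN] at h
      exact h
    have hk : (0:ℝ) < Real.sqrt (1 - (ε/2)^2) := Real.sqrt_pos.2 (by nlinarith)
    have hterm : ∀ i ∈ Finset.range N, arccos ⟪(γ (u i)).1, (γ (u (i+1))).1⟫_ℝ
        ≤ c i / Real.sqrt (1 - (ε/2)^2) := by
      intro i _
      rw [arccos_inner_eq _ _ (γ (u i)).2.1 (γ (u (i+1))).2.1]
      have hcd : ‖(γ (u i)).1 - (γ (u (i+1))).1‖ = c i := by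
        rw [hc]; dsimp only; rw [dist_hemi, norm_sub_rev]
      rw [hcd]
      exact arc_le_chord_div (c i) ε (hcnn i) (hcsmall i).le hε2
    have hfin : D ≤ (∑ i ∈ Finset.range N, c i) / Real.sqrt (1 - (ε/2)^2) := by
      rw [Finset.sum_div]
      exact le_trans hchain (Finset.sum_le_sum hterm)
    have := (le_div_iff₀ hk).1 hfin
    linarith
  -- pass to the limit
  have hDVr : D ≤ Vr := by
    apply le_of_forall_pos_le_add
    intro η hη
    set ε := min 1 (2 * Real.sqrt (η / (D + 1))) with hεdef
    have hε0 : 0 < ε := lt_min one_pos (by positivity)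
    have hε2 : ε < 2 := lt_of_le_of_lt (min_le_left _ _) one_lt_two
    have h := claim ε hε0 hε2
    have hx : (ε/2)^2 ≤ η/(D+1) := by
      have h1 : ε ≤ 2 * Real.sqrt (η/(D+1)) := min_le_right _ _
      have h2 : ε/2 ≤ Real.sqrt (η/(D+1)) := by linarith
      have h3 := Real.sq_sqrt (show (0:ℝ) ≤ η/(D+1) by positivity)
      nlinarith [hε0]
    have hx1 : (ε/2)^2 ≤ 1 := by nlinarith
    have hsq : 1 - (ε/2)^2 ≤ Real.sqrt (1 - (ε/2)^2) := by
      nth_rewrite 1 [show (1 - (ε/2)^2) = Real.sqrt ((1 - (ε/2)^2)^2) from (Real.sqrt_sq (by linarith)).symm]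
      apply Real.sqrt_le_sqrt
      nlinarith [sq_nonneg (ε/2), hx1, mul_nonneg (sub_nonneg.2 hx1) (sq_nonneg (ε/2))]
    have h4 : D * (1 - (ε/2)^2) ≤ Vr :=
      le_trans (mul_le_mul_of_nonneg_left hsq hD0) h
    have h5 : D * (ε/2)^2 ≤ η := by
      have := mul_le_mul_of_nonneg_left hx hD0
      have h6 : D * (η/(D+1)) ≤ η := by
        rw [mul_div_assoc']
        rw [div_le_iff₀ (by linarith : (0:ℝ) < D + 1)]
        nlinarith
      linarith
    nlinarith
  calc ENNReal.ofReal D ≤ ENNReal.ofReal Vr := ENNReal.ofReal_le_ofReal hDVr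
    _ = _ := ENNReal.ofReal_toReal hV

lemma colinear_of_eq (a b y : E3) (ha : ‖a‖ = 1) (hb : ‖b‖ = 1) (hy : ‖y‖ = 1)
    (h : arccos ⟪a, y⟫_ℝ + arccos ⟪y, b⟫_ℝ = arccos ⟪a, b⟫_ℝ) :
    Real.sin (arccos ⟪a, b⟫_ℝ) • y = Real.sin (arccos ⟪y, b⟫_ℝ) • a + Real.sin (arccos ⟪a, y⟫_ℝ) • b := by
  have hay : |⟪a, y⟫_ℝ| ≤ 1 := by
    have := abs_real_inner_le_norm a y; rwa [ha, hy, mul_one] at this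
  have hyb : |⟪y, b⟫_ℝ| ≤ 1 := by
    have := abs_real_inner_le_norm y b; rwa [hy, hb, mul_one] at this
  have hab : |⟪a, b⟫_ℝ| ≤ 1 := by
    have := abs_real_inner_le_norm a b; rwa [ha, hb, mul_one] at this
  set α := arccos ⟪a, y⟫_ℝ with hα
  set β := arccos ⟪y, b⟫_ℝ with hβ
  have hca : Real.cos α = ⟪a, y⟫_ℝ := Real.cos_arccos (by linarith [abs_le.1 hay]) (by linarith [abs_le.1 hay])
  have hcb : Real.cos β = ⟪y, b⟫_ℝ := Real.cos_arccos (by linarith [abs_le.1 hyb]) (by linarith [abs_le.1 hyb])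
  have hcab : Real.cos (α + β) = ⟪a, b⟫_ℝ := by
    rw [h]
    exact Real.cos_arccos (by linarith [abs_le.1 hab]) (by linarith [abs_le.1 hab])
  rw [← h]
  set w := Real.sin (α + β) • y - (Real.sin β • a + Real.sin α • b) with hw
  have hwz : ⟪w, w⟫_ℝ = 0 := by
    have haa : ⟪a, a⟫_ℝ = 1 := by rw [real_inner_self_eq_norm_sq, ha]; norm_num
    have hbb : ⟪b, b⟫_ℝ = 1 := by rw [real_inner_self_eq_norm_sq, hb]; norm_num
    have hyy : ⟪y, y⟫_ℝ = 1 := by rw [real_inner_self_eq_norm_sq, hy]; norm_num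
    have hya : ⟪y, a⟫_ℝ = Real.cos α := by rw [real_inner_comm, hca]
    have hby : ⟪b, y⟫_ℝ = Real.cos β := by rw [real_inner_comm, hcb]
    have hba : ⟪b, a⟫_ℝ = Real.cos (α + β) := by rw [real_inner_comm, hcab]
    simp only [hw, inner_sub_left, inner_sub_right, inner_add_left, inner_add_right,
      real_inner_smul_left, real_inner_smul_right, haa, hbb, hyy, hya, hby, hba, hca, hcb, hcab]
    have hsa := Real.sin_sq_add_cos_sq α
    have hsb := Real.sin_sq_add_cos_sq β
    rw [← hca, ← hcb, ← hcab, Real.sin_add, Real.cos_add]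
    linear_combination (-(Real.sin α)^2) * hsb - (Real.sin β)^2 * hsa
  have : w = 0 := by rwa [inner_self_eq_zero] at hwz
  have := sub_eq_zero.1 this
  exact this

lemma img (a b : Hemi) (γ : unitInterval → Hemi) (hγ : Continuous γ)
    (h0 : γ 0 = a) (h1 : γ 1 = b)
    (hlen : eVariationOn γ Set.univ = ENNReal.ofReal (arccos ⟪a.1, b.1⟫_ℝ))
    (t : unitInterval) :
    Real.sin (arccos ⟪a.1, b.1⟫_ℝ) • (γ t).1
      = Real.sin (arccos ⟪(γ t).1, b.1⟫_ℝ) • a.1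
        + Real.sin (arccos ⟪a.1, (γ t).1⟫_ℝ) • b.1 := by
  have hIcc : Set.Icc (0:unitInterval) 1 = Set.univ :=
    Set.eq_univ_of_forall (fun x => ⟨unitInterval.nonneg', unitInterval.le_one'⟩)
  have hadd := eVariationOn.Icc_add_Icc γ (s := Set.univ)
    (unitInterval.nonneg' : (0:unitInterval) ≤ t) (unitInterval.le_one' : t ≤ 1)
    (Set.mem_univ t)
  rw [Set.univ_inter, Set.univ_inter, Set.univ_inter, hIcc, hlen] at hadd
  have hne : eVariationOn γ (Set.Icc 0 t) + eVariationOn γ (Set.Icc t 1) ≠ ⊤ := by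
    rw [hadd]; exact ENNReal.ofReal_ne_top
  have h1ne : eVariationOn γ (Set.Icc 0 t) ≠ ⊤ := (ENNReal.add_ne_top.1 hne).1
  have h2ne : eVariationOn γ (Set.Icc t 1) ≠ ⊤ := (ENNReal.add_ne_top.1 hne).2
  have hAB := congrArg ENNReal.toReal hadd
  rw [ENNReal.toReal_add h1ne h2ne, ENNReal.toReal_ofReal (Real.arccos_nonneg _)] at hAB
  have hα' := dInt_le_var γ hγ 0 t unitInterval.nonneg'
  rw [h0] at hα'
  have hα := (ENNReal.ofReal_le_iff_le_toReal h1ne).1 hα'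
  have hβ' := dInt_le_var γ hγ t 1 unitInterval.le_one'
  rw [h1] at hβ'
  have hβ := (ENNReal.ofReal_le_iff_le_toReal h2ne).1 hβ'
  have htri := arccos_triangle' a.1 (γ t).1 b.1 a.2.1 (γ t).2.1 b.2.1
  have heq : arccos ⟪a.1, (γ t).1⟫_ℝ + arccos ⟪(γ t).1, b.1⟫_ℝ = arccos ⟪a.1, b.1⟫_ℝ := by
    linarith
  exact colinear_of_eq a.1 b.1 (γ t).1 a.2.1 b.2.1 (γ t).2.1 heq

-- the base point and the equatorial family
def pt0 : E3 := EuclideanSpace.single 0 1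
def ePt : E3 := EuclideanSpace.single 1 1
def rvec (θ : ℝ) : E3 := Real.cos θ • pt0 + Real.sin θ • ePt

lemma pt0_apply (j : Fin 3) : pt0 j = if j = 0 then 1 else 0 := by
  simp [pt0, EuclideanSpace.single_apply]

lemma ePt_apply (j : Fin 3) : ePt j = if j = 1 then 1 else 0 := by
  simp [ePt, EuclideanSpace.single_apply]

lemma rvec_apply (θ : ℝ) (j : Fin 3) :
    rvec θ j = Real.cos θ * pt0 j + Real.sin θ * ePt j := by
  simp [rvec]

lemma pt0_0 : pt0 0 = 1 := by rw [pt0_apply]; norm_num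
lemma pt0_1 : pt0 1 = 0 := by rw [pt0_apply]; simp
lemma pt0_2 : pt0 2 = 0 := by rw [pt0_apply]; simp
lemma ePt_0 : ePt 0 = 0 := by rw [ePt_apply]; simp
lemma ePt_1 : ePt 1 = 1 := by rw [ePt_apply]; norm_num
lemma ePt_2 : ePt 2 = 0 := by rw [ePt_apply]; simp
lemma rvec_0 (θ : ℝ) : rvec θ 0 = Real.cos θ := by
  rw [rvec_apply, pt0_0, ePt_0]; ring
lemma rvec_1 (θ : ℝ) : rvec θ 1 = Real.sin θ := by
  rw [rvec_apply, pt0_1, ePt_1]; ring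
lemma rvec_2 (θ : ℝ) : rvec θ 2 = 0 := by
  rw [rvec_apply, pt0_2, ePt_2]; ring

lemma inner_pt0_ePt : ⟪pt0, ePt⟫_ℝ = 0 := by
  simp [pt0, ePt, EuclideanSpace.inner_single_left, EuclideanSpace.single_apply]

lemma norm_pt0 : ‖pt0‖ = 1 := by
  simp [pt0, EuclideanSpace.norm_single]

lemma norm_ePt : ‖ePt‖ = 1 := by
  simp [ePt, EuclideanSpace.norm_single]

lemma inner_pt0_rvec (θ : ℝ) : ⟪pt0, rvec θ⟫_ℝ = Real.cos θ := by
  have h1 : ⟪pt0, pt0⟫_ℝ = 1 := by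
    rw [real_inner_self_eq_norm_sq, norm_pt0]; norm_num
  rw [rvec, inner_add_right, real_inner_smul_right, real_inner_smul_right, h1, inner_pt0_ePt]
  ring

lemma norm_rvec (θ : ℝ) : ‖rvec θ‖ = 1 := by
  have h1 : ⟪pt0, pt0⟫_ℝ = 1 := by
    rw [real_inner_self_eq_norm_sq, norm_pt0]; norm_num
  have h2 : ⟪ePt, ePt⟫_ℝ = 1 := by
    rw [real_inner_self_eq_norm_sq, norm_ePt]; norm_num
  have h3 : ⟪ePt, pt0⟫_ℝ = 0 := by rw [real_inner_comm]; exact inner_pt0_ePt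
  have hin : ⟪rvec θ, rvec θ⟫_ℝ = 1 := by
    simp only [rvec, inner_add_left, inner_add_right, real_inner_smul_left,
      real_inner_smul_right, h1, h2, h3, inner_pt0_ePt]
    nlinarith [Real.sin_sq_add_cos_sq θ]
  have := real_inner_self_eq_norm_sq (rvec θ)
  nlinarith [norm_nonneg (rvec θ), this, hin]

def P : Hemi := ⟨pt0, norm_pt0, by rw [pt0_2]⟩

def R (θ : ℝ) : Hemi := ⟨rvec θ, norm_rvec θ, by rw [rvec_2]⟩

lemma hRcont : Continuous R := by
  apply Continuous.subtype_mk
  exact (Real.continuous_cos.smul continuous_const).add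
    (Real.continuous_sin.smul continuous_const)

/-- there is no continuous motion planner on the closed upper hemisphere all
of whose output paths are minimizing, i.e. have length equal to the intrinsic distance
`d(p,q) = arccos ⟪p,q⟫`. -/
theorem stmt7 :
    ¬ ∃ mp : C(Hemi × Hemi, C(unitInterval, Hemi)),
      (∀ x : Hemi × Hemi, mp x 0 = x.1 ∧ mp x 1 = x.2) ∧
      ∀ x : Hemi × Hemi,
        pathLen ⇑(mp x) = ENNReal.ofReal (Real.arccos ⟪x.1.1, x.2.1⟫_ℝ) := by
  rintro ⟨mp, hends, hlen⟩
  -- key fact from the colinearity lemma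
  have key : ∀ (θ : ℝ) (t : unitInterval),
      Real.sin (arccos (Real.cos θ)) • ((mp (P, R θ)) t).1
        = Real.sin (arccos ⟪((mp (P, R θ)) t).1, (R θ).1⟫_ℝ) • pt0
          + Real.sin (arccos ⟪pt0, ((mp (P, R θ)) t).1⟫_ℝ) • rvec θ := by
    intro θ t
    have h := img P (R θ) ⇑(mp (P, R θ)) (mp (P, R θ)).continuous
      (hends (P, R θ)).1 (hends (P, R θ)).2 (by
        have := hlen (P, R θ)
        rw [pathLen] at this
        exact this) t
    rw [show (P.1 : E3) = pt0 from rfl, show ((R θ).1 : E3) = rvec θ from rfl,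
      inner_pt0_rvec] at h
    exact h
  -- coordinates of the path at parameter t, as functions of θ
  have hGcont : ∀ (t : unitInterval) (j : Fin 3),
      Continuous fun θ : ℝ => ((mp (P, R θ)) t).1 j := by
    intro t j
    have h1 : Continuous fun θ : ℝ => mp (P, R θ) :=
      mp.continuous.comp (continuous_const.prodMk hRcont)
    have h2 : Continuous fun θ : ℝ => (mp (P, R θ)) t :=
      (continuous_eval_const t).comp h1
    have h3 : Continuous fun θ : ℝ => ((mp (P, R θ)) t).1 :=
      continuous_subtype_val.comp h2
    exact (EuclideanSpace.proj j).continuous.comp h3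
  -- sign information on open arcs
  have sgn1 : ∀ (t : unitInterval), ∀ θ ∈ Ioo (0:ℝ) π,
      0 ≤ ((mp (P, R θ)) t).1 1 ∧ ((mp (P, R θ)) t).1 2 = 0 := by
    intro t θ hθ
    have hsθ : 0 < Real.sin θ := Real.sin_pos_of_pos_of_lt_pi hθ.1 hθ.2
    have hL : arccos (Real.cos θ) = θ := Real.arccos_cos hθ.1.le hθ.2.le
    have h := key θ t
    rw [hL] at h
    have h1 := congrFun (congrArg (fun v : E3 => (v : Fin 3 → ℝ)) h) 1
    have h2 := congrFun (congrArg (fun v : E3 => (v : Fin 3 → ℝ)) h) 2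
    simp only [PiLp.smul_apply, PiLp.add_apply, smul_eq_mul, rvec_1, rvec_2,
      pt0_1, pt0_2, mul_zero, mul_one, add_zero, zero_add] at h1 h2
    have hsinα : 0 ≤ Real.sin (arccos ⟪pt0, ((mp (P, R θ)) t).1⟫_ℝ) := by
      rw [Real.sin_arccos]; positivity
    constructor
    · nlinarith [mul_nonneg hsinα hsθ.le, h1, hsθ]
    · exact (mul_eq_zero.1 h2).resolve_left (ne_of_gt hsθ)
  have sgn2 : ∀ (t : unitInterval), ∀ θ ∈ Ioo π (2*π),
      ((mp (P, R θ)) t).1 1 ≤ 0 ∧ ((mp (P, R θ)) t).1 2 = 0 := by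
    intro t θ hθ
    have hsθ : Real.sin θ < 0 := by
      have := Real.sin_pos_of_pos_of_lt_pi (x := 2*π - θ) (by linarith [hθ.2]) (by linarith [hθ.1])
      have h2 : Real.sin (2*π - θ) = -Real.sin θ := by
        rw [Real.sin_two_pi_sub]  -- check name
      rw [h2] at this; linarith
    have hL : arccos (Real.cos θ) = 2*π - θ := by
      rw [← Real.cos_two_pi_sub, Real.arccos_cos (by linarith [hθ.2]) (by linarith [hθ.1])]
    have hsL : 0 < Real.sin (arccos (Real.cos θ)) := by
      rw [hL]
      exact Real.sin_pos_of_pos_of_lt_pi (by linarith [hθ.2]) (by linarith [hθ.1])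
    have h := key θ t
    have h1 := congrFun (congrArg (fun v : E3 => (v : Fin 3 → ℝ)) h) 1
    have h2 := congrFun (congrArg (fun v : E3 => (v : Fin 3 → ℝ)) h) 2
    simp only [PiLp.smul_apply, PiLp.add_apply, smul_eq_mul, rvec_1, rvec_2,
      pt0_1, pt0_2, mul_zero, mul_one, add_zero, zero_add] at h1 h2
    have hsinα : 0 ≤ Real.sin (arccos ⟪pt0, ((mp (P, R θ)) t).1⟫_ℝ) := by
      rw [Real.sin_arccos]; positivity
    constructor
    · nlinarith [mul_nonpos_of_nonneg_of_nonpos hsinα hsθ.le, h1, hsL]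
    · exact (mul_eq_zero.1 h2).resolve_left (ne_of_gt hsL)
  -- pass to the limit θ → π
  have atPi : ∀ t : unitInterval, ((mp (P, R π)) t).1 1 = 0 ∧ ((mp (P, R π)) t).1 2 = 0 := by
    intro t
    have hπmem1 : π ∈ closure (Ioo (0:ℝ) π) := by
      rw [closure_Ioo Real.pi_ne_zero.symm]
      exact ⟨Real.pi_pos.le, le_refl _⟩
    have hπmem2 : π ∈ closure (Ioo π (2*π)) := by
      rw [closure_Ioo (by linarith [Real.pi_pos] : π ≠ 2*π)]
      exact ⟨le_refl _, by linarith [Real.pi_pos]⟩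
    have hc1 := hGcont t 1
    have hc2 := hGcont t 2
    have hge : 0 ≤ ((mp (P, R π)) t).1 1 := by
      have hcl : IsClosed {θ : ℝ | 0 ≤ ((mp (P, R θ)) t).1 1} :=
        isClosed_le continuous_const hc1
      exact hcl.closure_subset_iff.2 (fun θ hθ => (sgn1 t θ hθ).1) hπmem1
    have hle : ((mp (P, R π)) t).1 1 ≤ 0 := by
      have hcl : IsClosed {θ : ℝ | ((mp (P, R θ)) t).1 1 ≤ 0} :=
        isClosed_le hc1 continuous_const
      exact hcl.closure_subset_iff.2 (fun θ hθ => (sgn2 t θ hθ).1) hπmem2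
    have hz : ((mp (P, R π)) t).1 2 = 0 := by
      have hcl : IsClosed {θ : ℝ | ((mp (P, R θ)) t).1 2 = 0} :=
        isClosed_eq hc2 continuous_const
      exact hcl.closure_subset_iff.2 (fun θ hθ => (sgn1 t θ hθ).2) hπmem1
    exact ⟨le_antisymm hle hge, hz⟩
  -- the first coordinate is ±1 along the path and changes sign: contradiction
  set γ := mp (P, R π) with hγdef
  have hsq : ∀ t : unitInterval, ((γ t).1 0) ^ 2 = 1 := by
    intro t
    have hn := (γ t).2.1
    have := EuclideanSpace.norm_eq (γ t).1
    rw [hn] at this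
    have h3 : ∑ i : Fin 3, ‖(γ t).1 i‖ ^ 2 = 1 := by
      have h0 : (0:ℝ) ≤ ∑ i : Fin 3, ‖(γ t).1 i‖ ^ 2 :=
        Finset.sum_nonneg fun i _ => sq_nonneg _
      nlinarith [Real.sq_sqrt h0, this]
    rw [Fin.sum_univ_three] at h3
    have hA := atPi t
    simp only [Real.norm_eq_abs, sq_abs] at h3
    nlinarith [hA.1, hA.2]
  have hf : Continuous fun t : unitInterval => (γ t).1 0 := by
    have h3 : Continuous fun t : unitInterval => (γ t).1 :=
      continuous_subtype_val.comp γ.continuous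
    exact (EuclideanSpace.proj (0 : Fin 3)).continuous.comp h3
  have hf0 : (γ 0).1 0 = 1 := by
    rw [(hends (P, R π)).1]
    show pt0 0 = 1
    rw [pt0_apply]; norm_num
  have hf1 : (γ 1).1 0 = -1 := by
    rw [(hends (P, R π)).2]
    show rvec π 0 = -1
    rw [rvec_apply, pt0_apply, ePt_apply]
    simp [Real.cos_pi, Real.sin_pi]
  -- intermediate value
  have hiv := intermediate_value_univ (X := unitInterval) 1 0 hf
  have : (0:ℝ) ∈ Set.Icc ((γ 1).1 0) ((γ 0).1 0) := by
    rw [hf0, hf1]; constructor <;> norm_num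
  obtain ⟨t, ht⟩ := hiv this
  have h := hsq t
  simp only at ht
  rw [ht] at h
  norm_num at h


end Stmt7Aux
end
end

section
/- Let X be a topological space. There exists a continuous global section of the endpoint fibration π : X^I → X × X, π(γ) = (γ(0), γ(1)), if and only if X is contractible. -/
open Set MeasureTheory unitInterval
open scoped Manifold ENNReal NNReal InnerProductSpace

noncomputable section

/-- Farber: a continuous global section of the endpoint fibration
`π : X^I → X × X` exists if and only if `X` is contractible. -/
theorem stmt14 (X : Type*) [TopologicalSpace X] [Nonempty X] :
    (∃ mp : C(X × X, C(unitInterval, X)),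
      ∀ x : X × X, mp x 0 = x.1 ∧ mp x 1 = x.2) ↔ ContractibleSpace X := by
  constructor
  · rintro ⟨mp, hmp⟩
    set x₀ : X := Classical.arbitrary X
    refine (contractible_iff_id_nullhomotopic X).2 ⟨x₀, ⟨{
      toFun := fun p => mp (p.2, x₀) p.1
      continuous_toFun := by
        have : Continuous fun p : unitInterval × X =>
            ((fun q : unitInterval × X => (mp (q.2, x₀), q.1)) p).1
              ((fun q : unitInterval × X => (mp (q.2, x₀), q.1)) p).2 := by
          apply continuous_eval.comp
          exact (mp.continuous.comp (by continuity)).prodMk continuous_fst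
        exact this
      map_zero_left := fun x => (hmp (x, x₀)).1
      map_one_left := fun x => (hmp (x, x₀)).2 }⟩⟩
  · intro hX
    obtain ⟨x₀, hnull⟩ := (contractible_iff_id_nullhomotopic X).1 hX
    obtain ⟨h⟩ := hnull
    have hc : Continuous fun q : (X × X) × unitInterval × X => h q.2 := by
      exact h.continuous.comp continuous_snd
    refine ⟨ContinuousMap.curry
      ⟨fun p : (X × X) × unitInterval =>
        if ((p.2 : ℝ)) ≤ 1 / 2 then
          h (Set.projIcc 0 1 zero_le_one (2 * (p.2 : ℝ)), p.1.1)
        else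
          h (Set.projIcc 0 1 zero_le_one (2 - 2 * (p.2 : ℝ)), p.1.2), ?_⟩, ?_⟩
    · apply Continuous.if_le
      · exact h.continuous.comp ((continuous_projIcc.comp
          (continuous_const.mul (continuous_subtype_val.comp continuous_snd))).prodMk
          (continuous_fst.comp continuous_fst))
      · exact h.continuous.comp ((continuous_projIcc.comp
          (continuous_const.sub (continuous_const.mul
            (continuous_subtype_val.comp continuous_snd)))).prodMk
          (continuous_snd.comp continuous_fst))
      · exact continuous_subtype_val.comp continuous_snd
      · exact continuous_const
      · intro p hp
        rw [hp]
        norm_num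
    · intro x
      constructor
      · show (if ((0 : unitInterval) : ℝ) ≤ 1/2 then _ else _) = _
        rw [if_pos (by norm_num : ((0 : unitInterval) : ℝ) ≤ 1/2)]
        have : Set.projIcc (0:ℝ) 1 zero_le_one (2 * ((0 : unitInterval) : ℝ)) =
            (0 : unitInterval) := by
          norm_num
        rw [this, h.apply_zero]
        rfl
      · show (if ((1 : unitInterval) : ℝ) ≤ 1/2 then _ else _) = _
        rw [if_neg (by norm_num : ¬ ((1 : unitInterval) : ℝ) ≤ 1/2)]
        have : Set.projIcc (0:ℝ) 1 zero_le_one (2 - 2 * ((1 : unitInterval) : ℝ)) =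
            (0 : unitInterval) := by
          norm_num
        rw [this, h.apply_zero]
        rfl
end
end

section
/- Let X be a compact metric space and let {G_i}_{i=0}^m be pairwise disjoint locally compact subsets covering X × X, with continuous maps σ_i : G_i → X^I that are sections of the endpoint fibration. If each G_i is Borel measurable and G_1, ..., G_m all have measure zero while σ₀ satisfies ℓ(σ₀(p,q)) = d(p,q) on G₀, then the combined planner σ satisfies ∫_{X×X} ℓ∘σ = ∫_{X×X} d, i.e., σ is efficient. -/
open Set MeasureTheory unitInterval
open scoped Manifold ENNReal NNReal InnerProductSpace

noncomputable section

/-- if the domains of continuity of a motion planner are measurable, all of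
them except `G 0` have measure zero, and the section over `G 0` outputs paths of length
`d(p,q)`, then the planner is efficient: `∫ ℓ∘σ = ∫ d`. -/
theorem stmt19 (X : Type*) [MetricSpace X] [CompactSpace X]
    [MeasurableSpace X] [BorelSpace X] (μ : MeasureTheory.Measure (X × X)) {m : ℕ}
    (P : MotionPlanner X m)
    (hmeas : ∀ i, MeasurableSet (P.G i))
    (hzero : ∀ i, i ≠ 0 → μ (P.G i) = 0)
    (heff : ∀ x : (P.G 0 : Set (X × X)),
      pathLen ⇑(P.sec 0 x) = edist (x : X × X).1 (x : X × X).2) :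
    P.length μ = ∫⁻ x : X × X, edist x.1 x.2 ∂μ := by
  have hsub : (P.G 0)ᶜ ⊆ ⋃ i : {i : Fin (m + 1) // i ≠ 0}, P.G i := by
    intro x hx
    have hxU : x ∈ ⋃ i, P.G i := by rw [P.covers]; exact Set.mem_univ x
    obtain ⟨i, hi⟩ := Set.mem_iUnion.1 hxU
    have hne : i ≠ 0 := fun h => hx (h ▸ hi)
    exact Set.mem_iUnion.2 ⟨⟨i, hne⟩, hi⟩
  have h0 : μ (⋃ i : {i : Fin (m + 1) // i ≠ 0}, P.G i) = 0 :=
    measure_iUnion_null fun i => hzero i i.2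
  have hcompl : μ (P.G 0)ᶜ = 0 := measure_mono_null hsub h0
  have hae : ∀ᵐ x ∂μ, x ∈ P.G 0 := by
    rw [MeasureTheory.ae_iff]
    exact hcompl
  refine lintegral_congr_ae (hae.mono fun x hx => ?_)
  have key : ∀ (i : Fin (m + 1)) (hxi : x ∈ P.G i),
      ⇑(P.sec i ⟨x, hxi⟩) = ⇑(P.sec 0 ⟨x, hx⟩) := by
    intro i hxi
    have hi0 : i = 0 := by
      by_contra hne
      exact Set.disjoint_left.mp (P.disj i 0 hne) hxi hx
    subst hi0; rfl
  have hpath : P.path x = ⇑(P.sec 0 ⟨x, hx⟩) := key _ _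
  show pathLen (P.path x) = edist x.1 x.2
  rw [hpath, heff ⟨x, hx⟩]
end
end
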